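/- Let L_n ⊆ S_n be a zigzag language and let π, ρ be two consecutive permutations in J(L_n) that differ in a jump of the value j. Then for every k ∈ {j+1,…,n}, either π^{[k]} = c_1(π^{[k−1]}) and ρ^{[k]} = c_1(ρ^{[k−1]}), or π^{[k]} = c_k(π^{[k−1]}) and ρ^{[k]} = c_k(ρ^{[k−1]}); that is, each value k > j occupies the first position in both π^{[k]} and ρ^{[k]}, or the last position in both. -/

import Mathlib

/-!
Shared definitions: permutations in one-line notation as lists of naturals,
deletion `p`, insertion `c_i`, zigzag languages, the Gray code sequence `J(L_n)`,
jumps, minimal jumps, the auxiliary sequences `s_n^π`, Algorithm M,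
vincular pattern containment and 2-clumped permutations.
-/

/-- `S_n`: permutations of `{1,…,n}` in one-line notation, as lists of naturals. -/
def SymmList (n : ℕ) : Set (List ℕ) := {l | List.Perm l (List.range' 1 n)}

/-- The identity permutation `id_n = 1 2 ⋯ n`. -/
def idPerm (n : ℕ) : List ℕ := List.range' 1 n

/-- `p(π)`: delete the largest entry `n = π.length` from the permutation `π ∈ S_n`. -/
def pdel (l : List ℕ) : List ℕ := l.erase l.length

/-- `c_i(π)`: insert the new largest value `π.length + 1` at (1-indexed) position `i`. -/
def cins (i : ℕ) (l : List ℕ) : List ℕ :=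
  l.take (i - 1) ++ (l.length + 1) :: l.drop (i - 1)

/-- Zigzag languages of permutations: `L_0 = {ε}` is a zigzag language, and
`L ⊆ S_{n+1}` is a zigzag language if `p(L)` is a zigzag language and
`c_1(π), c_{n+1}(π) ∈ L` for every `π ∈ p(L)`. -/
inductive IsZigzag : ℕ → Set (List ℕ) → Prop
  | zero : IsZigzag 0 {[]}
  | succ (n : ℕ) (L : Set (List ℕ)) :
      L ⊆ SymmList (n + 1) →
      IsZigzag n (pdel '' L) →
      (∀ l ∈ pdel '' L, cins 1 l ∈ L ∧ cins (n + 1) l ∈ L) →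
      IsZigzag (n + 1) L

/-- `→c(π)`: the sequence of those `c_1(π),…,c_n(π)` lying in `L`,
in increasing order of the insertion position. -/
noncomputable def cSeq (L : Set (List ℕ)) (n : ℕ) (l : List ℕ) : List (List ℕ) :=
  ((List.range' 1 n).map (fun i => cins i l)).filter
    (fun x => @decide (x ∈ L) (Classical.propDecidable _))

/-- The Gray code sequence `J(L_n)` of a language `L ⊆ S_n`:
`J(L_0) = ε`, and `J(L_{n+1})` is obtained from `J(L_n)` (for the language
`p(L)`) by replacing its entries alternately by `←c(π)` (the reverse of
`→c(π)`) and `→c(π)`. -/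
noncomputable def Jseq : ℕ → Set (List ℕ) → List (List ℕ)
  | 0, _ => [[]]
  | (n + 1), L =>
      (((Jseq n (pdel '' L)).mapIdx
        (fun k π => if k % 2 = 0 then (cSeq L (n + 1) π).reverse
                    else cSeq L (n + 1) π)).flatten)

/-- `ρ` is obtained from `π` by a right jump of the value `v` by `d` steps. -/
def RightJump (π ρ : List ℕ) (v d : ℕ) : Prop :=
  0 < d ∧ ∃ A B C : List ℕ, B.length = d ∧ (∀ x ∈ B, x < v) ∧
    π = A ++ v :: (B ++ C) ∧ ρ = A ++ (B ++ v :: C)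

/-- `ρ` is obtained from `π` by a left jump of the value `v` by `d` steps. -/
def LeftJump (π ρ : List ℕ) (v d : ℕ) : Prop := RightJump ρ π v d

/-- A right jump that is minimal with respect to `L`: every right jump of the
same value by fewer steps yields a permutation not in `L`. -/
def MinimalRightJump (L : Set (List ℕ)) (π ρ : List ℕ) (v d : ℕ) : Prop :=
  RightJump π ρ v d ∧ ∀ d' ρ', d' < d → RightJump π ρ' v d' → ρ' ∉ L

/-- A left jump that is minimal with respect to `L`. -/
def MinimalLeftJump (L : Set (List ℕ)) (π ρ : List ℕ) (v d : ℕ) : Prop :=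
  LeftJump π ρ v d ∧ ∀ d' ρ', d' < d → LeftJump π ρ' v d' → ρ' ∉ L

/-- The auxiliary sequence `s_n^π` of a permutation `π` occurring in `J(L_n)`,
as a function of the index `i ∈ {1,…,n}` (value `0` outside this range). -/
noncomputable def sVec : ℕ → Set (List ℕ) → List ℕ → ℕ → ℕ
  | 0, _, _, _ => 0
  | 1, _, _, i => if i = 1 then 1 else 0
  | (n + 2), L, π, i =>
      let L' := pdel '' L
      let π' := pdel π
      let cbar := if ((Jseq (n + 1) L').idxOf π') % 2 = 0
                  then (cSeq L (n + 2) π').reverse else cSeq L (n + 2) π'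
      if cbar.getLast? = some π then
        (if i ≤ n then sVec (n + 1) L' π' i
         else if i = n + 1 then n + 1
         else if i = n + 2 then sVec (n + 1) L' π' (n + 1) else 0)
      else
        (if i ≤ n + 1 then sVec (n + 1) L' π' i
         else if i = n + 2 then n + 2 else 0)

/-- `j` is at the first position of `l`, or the entry immediately left of `j`
in `l` is larger than `j`. -/
def AtLeftTurn (l : List ℕ) (j : ℕ) : Prop :=
  ∃ A B : List ℕ, l = A ++ j :: B ∧ (A = [] ∨ ∃ x, A.getLast? = some x ∧ j < x)

/-- `j` is at the last position of `l`, or the entry immediately right of `j`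
in `l` is larger than `j`. -/
def AtRightTurn (l : List ℕ) (j : ℕ) : Prop :=
  ∃ A B : List ℕ, l = A ++ j :: B ∧ (B = [] ∨ ∃ x, B.head? = some x ∧ j < x)

/-- `j` is not at the first position of `l`, and the entry immediately left of
`j` in `l` is smaller than `j`. -/
def SmallerLeftNeighbor (l : List ℕ) (j : ℕ) : Prop :=
  ∃ A B : List ℕ, ∃ x, l = A ++ j :: B ∧ A.getLast? = some x ∧ x < j

/-- `j` is not at the last position of `l`, and the entry immediately right of
`j` in `l` is smaller than `j`. -/
def SmallerRightNeighbor (l : List ℕ) (j : ℕ) : Prop :=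
  ∃ A B : List ℕ, ∃ x, l = A ++ j :: B ∧ B.head? = some x ∧ x < j

/-- A state of Algorithm M: the current permutation `π` and the auxiliary
arrays `o` and `s`; `o j = false` encodes direction `L` (left) and
`o j = true` encodes `R` (right). -/
structure MState where
  perm : List ℕ
  o : ℕ → Bool
  s : ℕ → ℕ

/-- The initial state of Algorithm M (step M1): `π = id_n`, `o_j = L`, `s_j = j`. -/
def MInit (n : ℕ) : MState := ⟨idPerm n, fun _ => false, fun j => j⟩

/-- One iteration (steps M3–M5) of Algorithm M on a language `L ⊆ S_n`:
with `j := s_n ≠ 1`, the permutation jumps minimally in the direction `o_j`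
(step M4), and the arrays `o`, `s` are updated as in step M5. -/
def MStep (L : Set (List ℕ)) (n : ℕ) (σ σ' : MState) : Prop :=
  σ.s n ≠ 1 ∧
  σ'.perm ∈ L ∧
  ((σ.o (σ.s n) = false ∧ ∃ d, MinimalLeftJump L σ.perm σ'.perm (σ.s n) d) ∨
   (σ.o (σ.s n) = true ∧ ∃ d, MinimalRightJump L σ.perm σ'.perm (σ.s n) d)) ∧
  (((σ.o (σ.s n) = false ∧ AtLeftTurn σ'.perm (σ.s n)) ∨
    (σ.o (σ.s n) = true ∧ AtRightTurn σ'.perm (σ.s n))) →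
      σ'.o = Function.update σ.o (σ.s n) (!σ.o (σ.s n)) ∧
      σ'.s = Function.update (Function.update (Function.update σ.s n n) (σ.s n)
               ((Function.update σ.s n n) (σ.s n - 1))) (σ.s n - 1) (σ.s n - 1)) ∧
  (¬ ((σ.o (σ.s n) = false ∧ AtLeftTurn σ'.perm (σ.s n)) ∨
      (σ.o (σ.s n) = true ∧ AtRightTurn σ'.perm (σ.s n))) →
      σ'.o = σ.o ∧ σ'.s = Function.update σ.s n n)

/-- `π` contains the vincular pattern `pat` whose marked adjacent pair starts
at (0-indexed) position `k` of `pat`. -/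
def ContainsVincular (π pat : List ℕ) (k : ℕ) : Prop :=
  ∃ f : ℕ → ℕ, StrictMonoOn f (Set.Iio pat.length) ∧
    (∀ i < pat.length, f i < π.length) ∧
    f (k + 1) = f k + 1 ∧
    (∀ i < pat.length, ∀ j < pat.length,
      (pat.getD i 0 < pat.getD j 0 ↔ π.getD (f i) 0 < π.getD (f j) 0))

/-- 2-clumped permutations: those avoiding the vincular patterns
`3(51)24`, `3(51)42`, `24(51)3` and `42(51)3`. -/
def TwoClumped (π : List ℕ) : Prop :=
  ¬ ContainsVincular π [3, 5, 1, 2, 4] 1 ∧ ¬ ContainsVincular π [3, 5, 1, 4, 2] 1 ∧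
  ¬ ContainsVincular π [2, 4, 5, 1, 3] 2 ∧ ¬ ContainsVincular π [4, 2, 5, 1, 3] 2

/-- `S'_n`: the set of 2-clumped permutations in `S_n`. -/
def SClump (n : ℕ) : Set (List ℕ) := {l ∈ SymmList n | TwoClumped l}

/-- `B_n`: the permutations obtained from `1` by repeatedly inserting the new
largest value at the first or the last position. -/
def Bset : ℕ → Set (List ℕ)
  | 0 => {[]}
  | 1 => {[1]}
  | (n + 2) => {l | ∃ π ∈ Bset (n + 1), l = cins 1 π ∨ l = cins (n + 2) π}

section Aux

-- basic SymmList facts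
lemma symm_length {n : ℕ} {l : List ℕ} (h : l ∈ SymmList n) : l.length = n :=
  (List.Perm.length_eq h).trans (List.length_range')

lemma symm_mem_le {n x : ℕ} {l : List ℕ} (h : l ∈ SymmList n) (hx : x ∈ l) : 1 ≤ x ∧ x ≤ n := by
  have := (List.Perm.mem_iff h).1 hx
  rw [List.mem_range'_1] at this
  omega

lemma symm_notmem {n : ℕ} {l : List ℕ} (h : l ∈ SymmList n) : (n + 1) ∉ l := by
  intro hx
  have := symm_mem_le h hx
  omega

lemma symm_top_mem {n : ℕ} {l : List ℕ} (h : l ∈ SymmList (n + 1)) : n + 1 ∈ l := by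
  refine (List.Perm.mem_iff h).2 ?_
  rw [List.mem_range'_1]
  omega

-- cins facts
lemma cins_length (i : ℕ) (l : List ℕ) : (cins i l).length = l.length + 1 := by
  simp [cins]
  omega

lemma cins_one (l : List ℕ) : cins 1 l = (l.length + 1) :: l := by
  simp [cins]

lemma cins_top (l : List ℕ) : cins (l.length + 1) l = l ++ [l.length + 1] := by
  simp [cins]

lemma pdel_cins {i : ℕ} {l : List ℕ} (hl : l.length + 1 ∉ l) : pdel (cins i l) = l := by
  unfold pdel
  rw [cins_length]
  show (l.take (i-1) ++ (l.length + 1) :: l.drop (i-1)).erase (l.length + 1) = l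
  rw [List.erase_append_right _ (fun h => hl (List.take_subset _ _ h)),
    List.erase_cons_head, List.take_append_drop]

-- jump stripping
lemma jump_head {x j d : ℕ} {a b : List ℕ} (h : RightJump (x :: a) (x :: b) j d) :
    RightJump a b j d := by
  obtain ⟨hd, A, B, C, hBlen, hBlt, hπ, hρ⟩ := h
  obtain ⟨y, B', rfl⟩ := List.exists_cons_of_ne_nil (show B ≠ [] by
    intro hB0; rw [hB0] at hBlen; simp at hBlen; omega)
  have hyj : y < j := hBlt y (by simp)
  cases A with
  | nil =>
    simp only [List.nil_append, List.cons_append, List.cons.injEq] at hπ hρ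
    omega
  | cons z A' =>
    simp only [List.cons_append, List.cons.injEq] at hπ hρ
    exact ⟨hd, A', y :: B', C, hBlen, hBlt, hπ.2, hρ.2⟩

lemma jump_last {x j d : ℕ} {a b : List ℕ} (h : RightJump (a ++ [x]) (b ++ [x]) j d) :
    RightJump a b j d := by
  obtain ⟨hd, A, B, C, hBlen, hBlt, hπ, hρ⟩ := h
  obtain ⟨y, B', rfl⟩ := List.exists_cons_of_ne_nil (show B ≠ [] by
    intro hB0; rw [hB0] at hBlen; simp at hBlen; omega)
  rcases List.eq_nil_or_concat C with rfl | ⟨C', c, rfl⟩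
  · -- C = [] : contradiction via last elements
    exfalso
    have h1 : (a ++ [x]).getLast? = some x := List.getLast?_concat
    have h2 : (b ++ [x]).getLast? = some x := List.getLast?_concat
    rw [hπ, List.append_nil, List.getLast?_append_cons, List.getLast?_cons_cons] at h1
    have hx1 : x ∈ y :: B' := List.mem_of_getLast? h1
    have hxj : x < j := hBlt x hx1
    have hbx : b ++ [x] = (A ++ (y :: B')) ++ [j] := by rw [hρ]; simp
    rw [hbx, List.getLast?_concat] at h2
    have : j = x := by injection h2
    omega
  · -- C = C' ++ [c]
    rw [List.concat_eq_append] at hπ hρ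
    have hπ' : a ++ [x] = (A ++ j :: ((y :: B') ++ C')) ++ [c] := by
      rw [hπ]; simp
    have hρ' : b ++ [x] = (A ++ ((y :: B') ++ j :: C')) ++ [c] := by
      rw [hρ]; simp
    obtain ⟨ha, hx⟩ := List.append_inj' hπ' rfl
    obtain ⟨hb, _⟩ := List.append_inj' hρ' rfl
    exact ⟨hd, A, y :: B', C', hBlen, hBlt, ha, hb⟩

lemma key_erase {n : ℕ} {a b : List ℕ} (ha : a ∈ SymmList (n + 1)) {j d : ℕ}
    (h : RightJump a b j d) (hj : j ≤ n) (heq : a.erase (n + 1) = b.erase (n + 1)) : False := by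
  obtain ⟨hd, A, B, C, hBlen, hBlt, rfl, rfl⟩ := h
  obtain ⟨x, B', rfl⟩ := List.exists_cons_of_ne_nil (show B ≠ [] by
    intro hB0; rw [hB0] at hBlen; simp at hBlen; omega)
  have hxj : x < j := hBlt x (by simp)
  have hBtop : (n + 1) ∉ x :: B' := by
    intro hmem
    have := hBlt _ hmem
    omega
  have hjtop : ((j : ℕ) == (n + 1 : ℕ)) ≠ true := by
    simp; omega
  by_cases hA : (n + 1) ∈ A
  · rw [List.erase_append_left _ hA, List.erase_append_left _ hA] at heq
    have h2 := List.append_cancel_left heq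
    rw [List.cons_append] at h2
    have : j = x := by injection h2
    omega
  · have hC : (n + 1) ∈ C := by
      have hm := symm_top_mem ha
      rcases List.mem_append.1 hm with h1 | h1
      · exact absurd h1 hA
      · rcases h1 with _ | h1
        · omega
        · rcases List.mem_append.1 (by assumption : (n+1) ∈ (x :: B') ++ C) with h2 | h2
          · exact absurd h2 hBtop
          · exact h2
    rw [List.erase_append_right _ hA, List.erase_append_right _ hA] at heq
    have e1 : (j :: ((x :: B') ++ C)).erase (n + 1) = j :: ((x :: B') ++ C.erase (n + 1)) := by
      rw [List.erase_cons_tail hjtop, List.erase_append_right _ hBtop]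
    have e2 : ((x :: B') ++ j :: C).erase (n + 1) = (x :: B') ++ j :: C.erase (n + 1) := by
      rw [List.erase_append_right _ hBtop, List.erase_cons_tail hjtop]
    rw [e1, e2] at heq
    have h2 := List.append_cancel_left heq
    rw [List.cons_append] at h2
    have : j = x := by injection h2
    omega

lemma flatten_consec {α : Type*} : ∀ (xs : List (List α)) (k : ℕ) (a b : α),
    (∀ (t : ℕ) (l : List α), xs[t]? = some l → l ≠ []) →
    xs.flatten[k]? = some a → xs.flatten[k + 1]? = some b →
    (∃ (t : ℕ) (l : List α), xs[t]? = some l ∧ a ∈ l ∧ b ∈ l) ∨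
    (∃ (t : ℕ) (l l' : List α), xs[t]? = some l ∧ xs[t + 1]? = some l' ∧
      l.getLast? = some a ∧ l'.head? = some b)
  | [], k, a, b, _, ha, _ => by simp at ha
  | l :: xs, k, a, b, hne, ha, hb => by
    rw [List.flatten_cons, List.getElem?_append] at ha hb
    by_cases h1 : k + 1 < l.length
    · left
      exact ⟨0, l, by simp, List.mem_of_getElem? (by rwa [if_pos (by omega)] at ha),
        List.mem_of_getElem? (by rwa [if_pos h1] at hb)⟩
    · by_cases h2 : k + 1 = l.length
      · right
        have hk : k < l.length := by omega
        rw [if_pos hk] at ha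
        rw [if_neg (by omega)] at hb
        have h0 : k + 1 - l.length = 0 := by omega
        rw [h0] at hb
        cases xs with
        | nil => simp at hb
        | cons l' xs' =>
          have hl' : l' ≠ [] := hne 1 l' (by simp)
          refine ⟨0, l, l', by simp, by simp, ?_, ?_⟩
          · rw [List.getLast?_eq_getElem?, show l.length - 1 = k by omega]
            exact ha
          · rw [List.flatten_cons, List.getElem?_append,
              if_pos (List.length_pos_iff.2 hl')] at hb
            rw [List.head?_eq_getElem?]
            exact hb
      · have hk : ¬ k < l.length := by omega
        rw [if_neg hk] at ha
        rw [if_neg (by omega), show k + 1 - l.length = (k - l.length) + 1 by omega] at hb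
        have hne' : ∀ (t : ℕ) (m : List α), xs[t]? = some m → m ≠ [] := fun t m h =>
          hne (t + 1) m (by simpa using h)
        rcases flatten_consec xs (k - l.length) a b hne' ha hb with
          ⟨t, m, hm1, hm2, hm3⟩ | ⟨t, m, m', hm1, hm2, hm3, hm4⟩
        · refine Or.inl ⟨t + 1, m, ?_, hm2, hm3⟩
          simpa using hm1
        · refine Or.inr ⟨t + 1, m, m', ?_, ?_, hm3, hm4⟩
          · simpa using hm1
          · simpa using hm2




lemma zz_subset {n : ℕ} {L : Set (List ℕ)} (h : IsZigzag n L) : L ⊆ SymmList n := by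
  cases h with
  | zero =>
    intro l hl
    rw [Set.mem_singleton_iff] at hl
    subst hl
    exact List.Perm.refl _
  | succ n L hsub _ _ => exact hsub

lemma cSeq_mem {L : Set (List ℕ)} {n : ℕ} {σ x : List ℕ} (hx : x ∈ cSeq L n σ) :
    x ∈ L ∧ ∃ i, x = cins i σ := by
  rw [cSeq, List.mem_filter] at hx
  obtain ⟨hx1, hx2⟩ := hx
  refine ⟨@of_decide_eq_true _ (Classical.propDecidable _) hx2, ?_⟩
  rw [List.mem_map] at hx1
  obtain ⟨i, _, rfl⟩ := hx1
  exact ⟨i, rfl⟩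

lemma cins_one_mem_cSeq {L : Set (List ℕ)} {n : ℕ} {σ : List ℕ} (h : cins 1 σ ∈ L) :
    cins 1 σ ∈ cSeq L (n + 1) σ := by
  rw [cSeq, List.mem_filter]
  constructor
  · rw [List.mem_map]
    exact ⟨1, by rw [List.mem_range'_1]; omega, rfl⟩
  · exact @decide_eq_true _ (Classical.propDecidable _) h

lemma Jseq_subset {n : ℕ} {L : Set (List ℕ)} (h : IsZigzag n L) :
    ∀ x ∈ Jseq n L, x ∈ L := by
  intro x hx
  cases h with
  | zero =>
    simp only [Jseq, List.mem_singleton] at hx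
    subst hx
    rfl
  | succ n L hsub hzz hcl =>
    rw [Jseq, List.mem_flatten] at hx
    obtain ⟨bl, hbl, hxbl⟩ := hx
    rw [List.mem_iff_getElem?] at hbl
    obtain ⟨t, hbl⟩ := hbl
    rw [List.getElem?_mapIdx] at hbl
    obtain ⟨σ, hσ, rfl⟩ := Option.map_eq_some_iff.1 hbl
    have hx' : x ∈ cSeq L (n + 1) σ := by
      by_cases ht : t % 2 = 0
      · rw [if_pos ht, List.mem_reverse] at hxbl; exact hxbl
      · rw [if_neg ht] at hxbl; exact hxbl
    exact (cSeq_mem hx').1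

lemma cSeq_head {L : Set (List ℕ)} {n : ℕ} {σ : List ℕ} (h : cins 1 σ ∈ L) :
    (cSeq L (n + 1) σ).head? = some (cins 1 σ) := by
  rw [cSeq, List.range'_succ, List.map_cons, List.filter_cons, if_pos (@decide_eq_true _ (Classical.propDecidable _) h)]
  rfl

lemma cSeq_last {L : Set (List ℕ)} {n : ℕ} {σ : List ℕ} (h : cins (n + 1) σ ∈ L) :
    (cSeq L (n + 1) σ).getLast? = some (cins (n + 1) σ) := by
  rw [cSeq, List.range'_concat, show 1 + 1 * n = n + 1 by omega, List.map_append,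
    List.filter_append]
  rw [List.map_singleton, List.filter_cons, if_pos (@decide_eq_true _ (Classical.propDecidable _) h), List.filter_nil,
    List.getLast?_concat]


theorem auxMain (n : ℕ) : ∀ (L : Set (List ℕ)), IsZigzag n L →
    ∀ (k : ℕ) (π ρ : List ℕ), (Jseq n L)[k]? = some π → (Jseq n L)[k + 1]? = some ρ →
    ∀ j : ℕ, (∃ d, LeftJump π ρ j d ∨ RightJump π ρ j d) →
    ∀ m, j + 1 ≤ m → m ≤ n →
      (pdel^[n - m] π = cins 1 (pdel^[n - m + 1] π) ∧
       pdel^[n - m] ρ = cins 1 (pdel^[n - m + 1] ρ)) ∨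
      (pdel^[n - m] π = cins m (pdel^[n - m + 1] π) ∧
       pdel^[n - m] ρ = cins m (pdel^[n - m + 1] ρ)) := by
  induction n with
  | zero => intro L _ k π ρ _ _ j _ m hm1 hm2; omega
  | succ n ih =>
    intro L hL k π ρ hπ hρ j hjump
    obtain ⟨hsub, hzz, hcl⟩ :
        L ⊆ SymmList (n + 1) ∧ IsZigzag n (pdel '' L) ∧
          (∀ l ∈ pdel '' L, cins 1 l ∈ L ∧ cins (n + 1) l ∈ L) := by
      cases hL with
      | succ _ _ a b c => exact ⟨a, b, c⟩
    simp only [Jseq] at hπ hρ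
    set L' := pdel '' L with hL'
    set F : ℕ → List ℕ → List (List ℕ) :=
      fun k π => if k % 2 = 0 then (cSeq L (n + 1) π).reverse else cSeq L (n + 1) π with hF
    have hne : ∀ (t : ℕ) (bl : List (List ℕ)),
        ((Jseq n L').mapIdx F)[t]? = some bl → bl ≠ [] := by
      intro t bl h
      rw [List.getElem?_mapIdx] at h
      obtain ⟨σ, hσ, rfl⟩ := Option.map_eq_some_iff.1 h
      have hσL : σ ∈ L' := Jseq_subset hzz _ (List.mem_of_getElem? hσ)
      have h1 : cins 1 σ ∈ L := (hcl σ hσL).1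
      have hcs : cSeq L (n + 1) σ ≠ [] := List.ne_nil_of_mem (cins_one_mem_cSeq h1)
      by_cases ht : t % 2 = 0 <;> simp [hF, ht, hcs]
    rcases flatten_consec _ k π ρ hne hπ hρ with
      ⟨t, bl, hblt, hπbl, hρbl⟩ | ⟨t, bl, bl', hblt, hblt', hlast, hhead⟩
    · -- same block: jump value must exceed n, range empty
      rw [List.getElem?_mapIdx] at hblt
      obtain ⟨σ, hσ, rfl⟩ := Option.map_eq_some_iff.1 hblt
      have hσL : σ ∈ L' := Jseq_subset hzz _ (List.mem_of_getElem? hσ)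
      have hσS : σ ∈ SymmList n := zz_subset hzz hσL
      have hσtop : σ.length + 1 ∉ σ := by
        rw [symm_length hσS]; exact symm_notmem hσS
      have hget : ∀ x, x ∈ F t σ → pdel x = σ ∧ x ∈ L := by
        intro x hx
        have hx' : x ∈ cSeq L (n + 1) σ := by
          by_cases ht : t % 2 = 0
          · simp only [hF, if_pos ht, List.mem_reverse] at hx; exact hx
          · simp only [hF, if_neg ht] at hx; exact hx
        obtain ⟨hxL, i, rfl⟩ := cSeq_mem hx'
        exact ⟨pdel_cins hσtop, hxL⟩
      obtain ⟨hπp, hπL⟩ := hget π hπbl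
      obtain ⟨hρp, hρL⟩ := hget ρ hρbl
      intro m hm1 hm2
      exfalso
      have hj : j ≤ n := by omega
      have hπS := hsub hπL
      have hρS := hsub hρL
      have heq : π.erase (n + 1) = ρ.erase (n + 1) := by
        have e1 : pdel π = π.erase (n + 1) := by unfold pdel; rw [symm_length hπS]
        have e2 : pdel ρ = ρ.erase (n + 1) := by unfold pdel; rw [symm_length hρS]
        rw [← e1, ← e2, hπp, hρp]
      obtain ⟨d, hd | hd⟩ := hjump
      · exact key_erase hρS hd hj heq.symm
      · exact key_erase hπS hd hj heq
    · -- block boundary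
      rw [List.getElem?_mapIdx] at hblt hblt'
      obtain ⟨σ, hσ, rfl⟩ := Option.map_eq_some_iff.1 hblt
      obtain ⟨τ, hτ, rfl⟩ := Option.map_eq_some_iff.1 hblt'
      have hσL : σ ∈ L' := Jseq_subset hzz _ (List.mem_of_getElem? hσ)
      have hτL : τ ∈ L' := Jseq_subset hzz _ (List.mem_of_getElem? hτ)
      have hσS : σ ∈ SymmList n := zz_subset hzz hσL
      have hτS : τ ∈ SymmList n := zz_subset hzz hτL
      have hσlen := symm_length hσS
      have hτlen := symm_length hτS
      have hσtop : σ.length + 1 ∉ σ := by rw [hσlen]; exact symm_notmem hσS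
      have hτtop : τ.length + 1 ∉ τ := by rw [hτlen]; exact symm_notmem hτS
      have hσ1 : cins 1 σ = (n + 1) :: σ := by rw [cins_one, hσlen]
      have hτ1 : cins 1 τ = (n + 1) :: τ := by rw [cins_one, hτlen]
      have hσ2 : cins (n + 1) σ = σ ++ [n + 1] := by rw [← hσlen]; exact cins_top σ
      have hτ2 : cins (n + 1) τ = τ ++ [n + 1] := by rw [← hτlen]; exact cins_top τ
      have hkey : (π = cins 1 σ ∧ ρ = cins 1 τ) ∨
          (π = cins (n + 1) σ ∧ ρ = cins (n + 1) τ) := by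
        by_cases ht : t % 2 = 0
        · left
          have ht' : ¬ (t + 1) % 2 = 0 := by omega
          constructor
          · have h1 : (F t σ).getLast? = some (cins 1 σ) := by
              simp only [hF, if_pos ht, List.getLast?_reverse]
              exact cSeq_head (hcl σ hσL).1
            exact Option.some.inj (hlast.symm.trans h1)
          · have h1 : (F (t + 1) τ).head? = some (cins 1 τ) := by
              simp only [hF, if_neg ht']
              exact cSeq_head (hcl τ hτL).1
            exact Option.some.inj (hhead.symm.trans h1)
        · right
          have ht' : (t + 1) % 2 = 0 := by omega
          constructor
          · have h1 : (F t σ).getLast? = some (cins (n + 1) σ) := by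
              simp only [hF, if_neg ht]
              exact cSeq_last (hcl σ hσL).2
            exact Option.some.inj (hlast.symm.trans h1)
          · have h1 : (F (t + 1) τ).head? = some (cins (n + 1) τ) := by
              simp only [hF, if_pos ht', List.head?_reverse]
              exact cSeq_last (hcl τ hτL).2
            exact Option.some.inj (hhead.symm.trans h1)
      have hπp : pdel π = σ := by
        rcases hkey with ⟨hπe, _⟩ | ⟨hπe, _⟩ <;> rw [hπe] <;> exact pdel_cins hσtop
      have hρp : pdel ρ = τ := by
        rcases hkey with ⟨_, hρe⟩ | ⟨_, hρe⟩ <;> rw [hρe] <;> exact pdel_cins hτtop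
      have hjump' : ∃ d, LeftJump σ τ j d ∨ RightJump σ τ j d := by
        obtain ⟨d, hd | hd⟩ := hjump <;>
          rcases hkey with ⟨hπe, hρe⟩ | ⟨hπe, hρe⟩
        · have hd' : RightJump ρ π j d := hd
          rw [hπe, hρe, hσ1, hτ1] at hd'
          exact ⟨d, Or.inl (jump_head hd')⟩
        · have hd' : RightJump ρ π j d := hd
          rw [hπe, hρe, hσ2, hτ2] at hd'
          exact ⟨d, Or.inl (jump_last hd')⟩
        · have hd' : RightJump π ρ j d := hd
          rw [hπe, hρe, hσ1, hτ1] at hd'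
          exact ⟨d, Or.inr (jump_head hd')⟩
        · have hd' : RightJump π ρ j d := hd
          rw [hπe, hρe, hσ2, hτ2] at hd'
          exact ⟨d, Or.inr (jump_last hd')⟩
      intro m hm1 hm2
      by_cases hmn : m ≤ n
      · have H := ih L' hzz t σ τ hσ hτ j hjump' m hm1 hmn
        have e1 : n + 1 - m = (n - m) + 1 := by omega
        rw [e1]
        simp only [Function.iterate_succ_apply] at H ⊢
        rw [hπp, hρp]
        exact H
      · have hm : m = n + 1 := by omega
        subst hm
        rw [show n + 1 - (n + 1) = 0 by omega]
        simp only [Function.iterate_zero_apply, zero_add, Function.iterate_one]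
        rw [hπp, hρp]
        rcases hkey with ⟨hπe, hρe⟩ | ⟨hπe, hρe⟩
        · exact Or.inl ⟨hπe, hρe⟩
        · exact Or.inr ⟨hπe, hρe⟩

end Aux

/-- Let `L_n ⊆ S_n` be a zigzag language and let `π, ρ` be two
consecutive permutations in `J(L_n)` that differ in a jump of the value `j`.
Then for every `k ∈ {j+1,…,n}`, either `π^{[k]} = c_1(π^{[k−1]})` and
`ρ^{[k]} = c_1(ρ^{[k−1]})`, or `π^{[k]} = c_k(π^{[k−1]})` and
`ρ^{[k]} = c_k(ρ^{[k−1]})`. -/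
theorem Jseq_jump_boundary_values (n : ℕ) (L : Set (List ℕ)) (hL : IsZigzag n L)
    (k : ℕ) (π ρ : List ℕ)
    (hπ : (Jseq n L)[k]? = some π) (hρ : (Jseq n L)[k + 1]? = some ρ)
    (j : ℕ) (hjump : ∃ d, LeftJump π ρ j d ∨ RightJump π ρ j d) :
    ∀ m, j + 1 ≤ m → m ≤ n →
      (pdel^[n - m] π = cins 1 (pdel^[n - m + 1] π) ∧
       pdel^[n - m] ρ = cins 1 (pdel^[n - m + 1] ρ)) ∨
      (pdel^[n - m] π = cins m (pdel^[n - m + 1] π) ∧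
       pdel^[n - m] ρ = cins m (pdel^[n - m + 1] ρ)) := by
  exact auxMain n L hL k π ρ hπ hρ j hjump
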